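/- Let A be a unital semi-simple commutative Banach algebra and c ∈ ℂ. Suppose S : A → B is a surjective map onto a unital semi-simple commutative Banach algebra B satisfying σ(Sf·(Sg + c·1)) = σ(f·(g + c·1)) for all f, g ∈ A, fixing scalars, and satisfying Sf·(S(f⁻¹ − c)+c) = 1 for invertible f. If {f_m} is a sequence of invertible elements of A whose Gelfand transforms converge uniformly on M_A to a function f with 1/K < |f(x)| < K on M_A for some K > 0, then the Gelfand transforms of {Sf_m} form a uniformly Cauchy sequence on M_B whose limit is bounded between 1/K and K in modulus. -/

import Mathlib

open WeakDual

set_option maxHeartbeats 1000000 in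
theorem stmt17 {A B : Type*} [NormedCommRing A] [NormedAlgebra ℂ A] [CompleteSpace A]
    [NormedCommRing B] [NormedAlgebra ℂ B] [CompleteSpace B]
    (hAsemi : ∀ x : A, ∀ α : ℂ, spectrum ℂ x = {α} → x = algebraMap ℂ A α)
    (hBsemi : ∀ x : B, ∀ α : ℂ, spectrum ℂ x = {α} → x = algebraMap ℂ B α)
    (c : ℂ) (S : A → B) (hSsurj : Function.Surjective S)
    (hSconst : ∀ lam : ℂ, S (lam • 1) = lam • 1)
    (hSeq : ∀ f g : A, spectrum ℂ (S f * (S g + c • 1)) = spectrum ℂ (f * (g + c • 1)))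
    (hSinv : ∀ f : Aˣ, S ↑f * (S (↑f⁻¹ - c • 1) + c • 1) = 1)
    (fm : ℕ → Aˣ) (f : C(characterSpace ℂ A, ℂ)) (K : ℝ) (hK : 0 < K)
    (hbound : ∀ x : characterSpace ℂ A, 1 / K < ‖f x‖ ∧ ‖f x‖ < K)
    (hconv : Filter.Tendsto (fun m => gelfandTransform ℂ A ((fm m : A)))
      Filter.atTop (nhds f)) :
    CauchySeq (fun m => gelfandTransform ℂ B (S (fm m : A))) ∧
      ∃ F : C(characterSpace ℂ B, ℂ),
        Filter.Tendsto (fun m => gelfandTransform ℂ B (S (fm m : A)))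
          Filter.atTop (nhds F) ∧
        ∀ y : characterSpace ℂ B, 1 / K ≤ ‖F y‖ ∧ ‖F y‖ ≤ K := by
  rcases isEmpty_or_nonempty (characterSpace ℂ B) with hY | hY
  · -- trivial case: the character space of `B` is empty
    have heq : (fun m => gelfandTransform ℂ B (S (fm m : A)))
        = fun _ => gelfandTransform ℂ B (S (fm 0 : A)) :=
      funext fun m => ContinuousMap.ext fun y => isEmptyElim y
    refine ⟨?_, gelfandTransform ℂ B (S (fm 0 : A)), ?_, fun y => isEmptyElim y⟩
    · rw [heq]; exact tendsto_const_nhds.cauchySeq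
    · rw [heq]; exact tendsto_const_nhds
  -- the map `S` preserves spectra
  have hSfspec : ∀ a : A, spectrum ℂ (S a) = spectrum ℂ a := by
    intro a
    have eA : ((1 : ℂ) - c) • (1 : A) + c • 1 = 1 := by
      rw [← add_smul, sub_add_cancel, one_smul]
    have eB : ((1 : ℂ) - c) • (1 : B) + c • 1 = 1 := by
      rw [← add_smul, sub_add_cancel, one_smul]
    have h := hSeq a ((1 - c) • 1)
    rwa [hSconst, eA, eB, mul_one, mul_one] at h
  -- characters applied to `S f * (S (f⁻¹ - c) + c) = 1`
  have hmul : ∀ (m : ℕ) (y : characterSpace ℂ B),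
      y (S ((fm m : A))) * y (S (((fm m)⁻¹ : Aˣ) - c • 1) + c • 1) = 1 := by
    intro m y
    have h := congrArg y (hSinv (fm m))
    rwa [map_mul, map_one] at h
  -- values of characters on `S fₘ` are values of characters on `fₘ`
  have hmemrange : ∀ (m : ℕ) (y : characterSpace ℂ B),
      ∃ x : characterSpace ℂ A, y (S ((fm m : A))) = x ((fm m : A)) := by
    intro m y
    have h : y (S ((fm m : A))) ∈ spectrum ℂ ((fm m : A)) := by
      rw [← hSfspec]
      exact CharacterSpace.mem_spectrum_iff_exists.mpr ⟨y, rfl⟩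
    obtain ⟨x, hx⟩ := CharacterSpace.mem_spectrum_iff_exists.mp h
    exact ⟨x, hx.symm⟩
  -- the key ratio identity
  have hratio : ∀ (n m : ℕ) (y : characterSpace ℂ B), ∃ x : characterSpace ℂ A,
      y (S ((fm n : A))) * y (S (((fm m)⁻¹ : Aˣ) - c • 1) + c • 1)
        = x ((fm n : A)) * x (((fm m)⁻¹ : Aˣ) : A) := by
    intro n m y
    have hs := hSeq ((fm n : A)) (((fm m)⁻¹ : Aˣ) - c • 1)
    rw [sub_add_cancel] at hs
    have h : y (S ((fm n : A)) * (S (((fm m)⁻¹ : Aˣ) - c • 1) + c • 1))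
        ∈ spectrum ℂ ((fm n : A) * (((fm m)⁻¹ : Aˣ) : A)) := by
      rw [← hs]
      exact CharacterSpace.mem_spectrum_iff_exists.mpr ⟨y, rfl⟩
    obtain ⟨x, hx⟩ := CharacterSpace.mem_spectrum_iff_exists.mp h
    refine ⟨x, ?_⟩
    calc y (S ((fm n : A))) * y (S (((fm m)⁻¹ : Aˣ) - c • 1) + c • 1)
        = y (S ((fm n : A)) * (S (((fm m)⁻¹ : Aˣ) - c • 1) + c • 1)) := (map_mul y _ _).symm
      _ = x ((fm n : A) * (((fm m)⁻¹ : Aˣ) : A)) := hx.symm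
      _ = x ((fm n : A)) * x (((fm m)⁻¹ : Aˣ) : A) := map_mul x _ _
  have hxunit : ∀ (m : ℕ) (x : characterSpace ℂ A),
      x ((fm m : A)) * x (((fm m)⁻¹ : Aˣ) : A) = 1 := by
    intro m x
    rw [← map_mul, Units.mul_inv, map_one]
  -- nonempty character space of A
  obtain ⟨x₀', -⟩ := hmemrange 0 hY.some
  haveI : Nonempty (characterSpace ℂ A) := ⟨x₀'⟩
  -- uniform gap η
  set φ : characterSpace ℂ A → ℝ :=
    fun x => min (‖f x‖ - 1 / K) (K - ‖f x‖) with hφ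
  have hφc : Continuous φ := by
    apply Continuous.min
    · exact (continuous_norm.comp f.continuous).sub continuous_const
    · exact continuous_const.sub (continuous_norm.comp f.continuous)
  obtain ⟨x₀, -, hx₀⟩ := isCompact_univ.exists_isMinOn Set.univ_nonempty hφc.continuousOn
  set η : ℝ := φ x₀ with hηdef
  have hηpos : 0 < η := lt_min (by linarith [(hbound x₀).1]) (by linarith [(hbound x₀).2])
  have hηf : ∀ x : characterSpace ℂ A,
      1 / K + η ≤ ‖f x‖ ∧ ‖f x‖ ≤ K - η := by
    intro x
    have h := isMinOn_iff.mp hx₀ x (Set.mem_univ x)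
    constructor
    · have := min_le_left (‖f x‖ - 1 / K) (K - ‖f x‖); linarith
    · have := min_le_right (‖f x‖ - 1 / K) (K - ‖f x‖); linarith
  -- pointwise distance control
  have hdistpt : ∀ (g : C(characterSpace ℂ A, ℂ)) (x : characterSpace ℂ A) (r : ℝ),
      dist g f < r → ‖g x - f x‖ < r := by
    intro g x r h
    refine lt_of_le_of_lt ?_ h
    rw [← Complex.dist_eq]
    exact ContinuousMap.dist_apply_le_dist x
  obtain ⟨N0, hN0⟩ := Metric.tendsto_atTop.mp hconv (η / 2) (by positivity)
  have hgm : ∀ m : ℕ, N0 ≤ m → ∀ x : characterSpace ℂ A,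
      1 / K + η / 2 ≤ ‖x ((fm m : A))‖
        ∧ ‖x ((fm m : A))‖ ≤ K - η / 2 := by
    intro m hm x
    have hd : ‖(gelfandTransform ℂ A ((fm m : A))) x - f x‖ < η / 2 :=
      hdistpt _ x _ (hN0 m hm)
    have happ : (gelfandTransform ℂ A ((fm m : A))) x = x ((fm m : A)) := rfl
    rw [happ] at hd
    have hsym : ‖f x - x ((fm m : A))‖
        = ‖x ((fm m : A)) - f x‖ := norm_sub_rev _ _
    have t1 : ‖f x‖
        ≤ ‖f x - x ((fm m : A))‖ + ‖x ((fm m : A))‖ := by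
      calc ‖f x‖
          = ‖(f x - x ((fm m : A))) + x ((fm m : A))‖ := by congr 1; ring
        _ ≤ _ := norm_add_le _ _
    have t2 : ‖x ((fm m : A))‖
        ≤ ‖x ((fm m : A)) - f x‖ + ‖f x‖ := by
      calc ‖x ((fm m : A))‖
          = ‖(x ((fm m : A)) - f x) + f x‖ := by congr 1; ring
        _ ≤ _ := norm_add_le _ _
    obtain ⟨hf1, hf2⟩ := hηf x
    rw [hsym] at t1
    exact ⟨by linarith, by linarith⟩
  -- the main Cauchy estimate
  have hcauchy : CauchySeq (fun m => gelfandTransform ℂ B (S (fm m : A))) := by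
    rw [Metric.cauchySeq_iff]
    intro ε hε
    set δ : ℝ := min (η / 2) (ε / (4 * K * K + 1)) with hδdef
    have hδpos : 0 < δ := lt_min (by positivity) (by positivity)
    obtain ⟨N1, hN1⟩ := Metric.tendsto_atTop.mp hconv δ hδpos
    refine ⟨max N0 N1, fun m hm n hn => ?_⟩
    have hmN0 : N0 ≤ m := le_trans (le_max_left _ _) hm
    have hnN0 : N0 ≤ n := le_trans (le_max_left _ _) hn
    have hmN1 : N1 ≤ m := le_trans (le_max_right _ _) hm
    have hnN1 : N1 ≤ n := le_trans (le_max_right _ _) hn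
    refine lt_of_le_of_lt ((ContinuousMap.dist_le (by positivity)).mpr fun y => ?_)
      (by linarith : ε / 2 < ε)
    -- pointwise estimate
    obtain ⟨x, hx⟩ := hratio m n y
    have hkey : y (S ((fm m : A))) * x ((fm n : A))
        = x ((fm m : A)) * y (S ((fm n : A))) := by
      linear_combination (x ((fm n : A)) * y (S ((fm n : A)))) * hx
        - (y (S ((fm m : A))) * x ((fm n : A))) * (hmul n y)
        + (x ((fm m : A)) * y (S ((fm n : A)))) * (hxunit n x)
    have hkey2 : (y (S ((fm m : A))) - y (S ((fm n : A)))) * x ((fm n : A))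
        = (x ((fm m : A)) - x ((fm n : A))) * y (S ((fm n : A))) := by
      linear_combination hkey
    have habs : ‖y (S ((fm m : A))) - y (S ((fm n : A)))‖
          * ‖x ((fm n : A))‖
        = ‖x ((fm m : A)) - x ((fm n : A))‖
          * ‖y (S ((fm n : A)))‖ := by
      rw [← norm_mul, ← norm_mul, hkey2]
    -- bounds
    have hb1 : 1 / K ≤ ‖x ((fm n : A))‖ := by
      have := (hgm n hnN0 x).1; linarith
    have hb2 : ‖x ((fm m : A)) - x ((fm n : A))‖ ≤ 2 * δ := by
      have hdm := hdistpt (gelfandTransform ℂ A ((fm m : A))) x δ (hN1 m hmN1)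
      have hdn := hdistpt (gelfandTransform ℂ A ((fm n : A))) x δ (hN1 n hnN1)
      have happm : (gelfandTransform ℂ A ((fm m : A))) x = x ((fm m : A)) := rfl
      have happn : (gelfandTransform ℂ A ((fm n : A))) x = x ((fm n : A)) := rfl
      rw [happm] at hdm
      rw [happn] at hdn
      have htri : ‖x ((fm m : A)) - x ((fm n : A))‖
          ≤ ‖x ((fm m : A)) - f x‖ + ‖f x - x ((fm n : A))‖ :=
        norm_sub_le_norm_sub_add_norm_sub _ _ _
      rw [norm_sub_rev (f x)] at htri
      linarith
    have hb3 : ‖y (S ((fm n : A)))‖ ≤ K := by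
      obtain ⟨x', hx'⟩ := hmemrange n y
      rw [hx']
      have := (hgm n hnN0 x').2; linarith
    -- conclude
    set α : ℝ := ‖y (S ((fm m : A))) - y (S ((fm n : A)))‖ with hα
    have h4 : α * (1 / K) ≤ α * ‖x ((fm n : A))‖ :=
      mul_le_mul_of_nonneg_left hb1 (norm_nonneg _)
    have h5 : ‖x ((fm m : A)) - x ((fm n : A))‖
          * ‖y (S ((fm n : A)))‖ ≤ (2 * δ) * K :=
      mul_le_mul hb2 hb3 (norm_nonneg _) (by positivity)
    have h6 : α * (1 / K) ≤ 2 * δ * K := by linarith [h4, h5, habs]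
    have h7 : α ≤ 2 * δ * K * K := by
      have := mul_le_mul_of_nonneg_right h6 hK.le
      calc α = α * (1 / K) * K := by field_simp
        _ ≤ 2 * δ * K * K := this
    have h8 : 2 * δ * K * K ≤ ε / 2 := by
      have hδle : δ ≤ ε / (4 * K * K + 1) := min_le_right _ _
      have hq : ε / (4 * K * K + 1) * (2 * K * K) ≤ ε / 2 := by
        rw [div_mul_eq_mul_div, div_le_div_iff₀ (by positivity) (by norm_num)]
        nlinarith [hε.le, sq_nonneg K]
      have := mul_le_mul_of_nonneg_right hδle (by positivity : (0:ℝ) ≤ 2 * K * K)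
      calc 2 * δ * K * K = δ * (2 * K * K) := by ring
        _ ≤ ε / (4 * K * K + 1) * (2 * K * K) := this
        _ ≤ ε / 2 := hq
    show dist ((gelfandTransform ℂ B (S (fm m : A))) y)
      ((gelfandTransform ℂ B (S (fm n : A))) y) ≤ ε / 2
    rw [Complex.dist_eq]
    exact le_trans h7 h8
  refine ⟨hcauchy, ?_⟩
  obtain ⟨F, hF⟩ := cauchySeq_tendsto_of_complete hcauchy
  refine ⟨F, hF, fun y => ?_⟩
  have hpt : Filter.Tendsto (fun m => (gelfandTransform ℂ B (S (fm m : A))) y)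
      Filter.atTop (nhds (F y)) :=
    ((continuous_eval_const y).tendsto F).comp hF
  have habs : Filter.Tendsto (fun m => ‖(gelfandTransform ℂ B (S (fm m : A))) y‖)
      Filter.atTop (nhds (‖F y‖)) :=
    (continuous_norm.tendsto _).comp hpt
  have hev : ∀ m : ℕ, N0 ≤ m →
      1 / K ≤ ‖(gelfandTransform ℂ B (S (fm m : A))) y‖
        ∧ ‖(gelfandTransform ℂ B (S (fm m : A))) y‖ ≤ K := by
    intro m hm
    obtain ⟨x', hx'⟩ := hmemrange m y
    have happ : (gelfandTransform ℂ B (S (fm m : A))) y = y (S ((fm m : A))) := rfl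
    rw [happ, hx']
    obtain ⟨h1, h2⟩ := hgm m hm x'
    constructor <;> linarith
  constructor
  · exact ge_of_tendsto habs (Filter.eventually_atTop.mpr ⟨N0, fun m hm => (hev m hm).1⟩)
  · exact le_of_tendsto habs (Filter.eventually_atTop.mpr ⟨N0, fun m hm => (hev m hm).2⟩)
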